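/- Let X be a connected graph with basepoint x₀. The homology classes of loops based at x₀ form a group under composition ⟦γ⟧⟦δ⟧ = ⟦γδ⟧, and the map sending ⟦γ⟧ to the 1-chain c_γ is a well-defined group isomorphism from this group onto the group Z₁(X,ℤ) of integral 1-cycles. -/

import Mathlib

/-- A graph in the sense of Sunada's topological crystallography: a set of vertices,
a set of edges, source and target maps, and a fixed-point free involution sending
each edge to its inverse. -/
structure SunadaGraph where
  V : Type
  E : Type
  s : E → V
  t : E → V
  inv : E → E
  s_inv : ∀ e, s (inv e) = t e
  t_inv : ∀ e, t (inv e) = s e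
  inv_inv : ∀ e, inv (inv e) = e
  inv_ne : ∀ e, inv e ≠ e

namespace SunadaGraph

variable (X : SunadaGraph)

/-- `X.IsPath x y γ` : the word of edges `γ` is a path from `x` to `y` in `X`. -/
inductive IsPath : X.V → X.V → List X.E → Prop
  | nil (x : X.V) : IsPath x x []
  | cons (e : X.E) {y : X.V} {γ : List X.E} (h : IsPath (X.t e) y γ) :
      IsPath (X.s e) y (e :: γ)

/-- A graph is connected if any two vertices are joined by a path. -/
def Connected : Prop := ∀ x y : X.V, ∃ γ : List X.E, X.IsPath x y γ

/-- An edge is a bridge if there is no path from its target to its source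
avoiding both the edge and its inverse. -/
def IsBridge (e : X.E) : Prop :=
  ¬ ∃ γ : List X.E, X.IsPath (X.t e) (X.s e) γ ∧ e ∉ γ ∧ X.inv e ∉ γ

/-- The space `C₁(X,ℝ)` of real 1-chains: formal linear combinations of edges
with `e⁻¹ = -e`, realized as finitely supported functions `c : E → ℝ` with
`c(e⁻¹) = - c(e)`. -/
noncomputable def C1 : Submodule ℝ (X.E →₀ ℝ) where
  carrier := {c | ∀ e, c (X.inv e) = - c e}
  add_mem' := by
    intro a b ha hb e
    simp only [Finsupp.add_apply, ha e, hb e]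
    ring
  zero_mem' := by intro e; simp
  smul_mem' := by
    intro r c hc e
    simp only [Finsupp.smul_apply, hc e, smul_eq_mul]
    ring

/-- The 1-chain associated to a single edge. -/
noncomputable def edgeChain (e : X.E) : ↥X.C1 :=
  ⟨Finsupp.single e 1 - Finsupp.single (X.inv e) 1, by
    intro f
    classical
    have h1 : (e = X.inv f) ↔ (X.inv e = f) := by
      constructor
      · rintro rfl; exact X.inv_inv f
      · rintro rfl; exact (X.inv_inv e).symm
    have h2 : (X.inv e = X.inv f) ↔ (e = f) := by
      constructor
      · intro h
        have := congrArg X.inv h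
        rwa [X.inv_inv, X.inv_inv] at this
      · rintro rfl; rfl
    simp only [Finsupp.sub_apply, Finsupp.single_apply, h1, h2]
    ring⟩

/-- The 1-chain `c_γ` of a path `γ`. -/
noncomputable def pathChain (γ : List X.E) : ↥X.C1 := (γ.map X.edgeChain).sum

/-- The inner product on `C₁(X,ℝ)` for which the edges form an orthonormal basis
(with `e⁻¹` counting as the negative of `e`). -/
noncomputable def chainInner (c d : ↥X.C1) : ℝ :=
  (1/2) * ((c : X.E →₀ ℝ).sum fun e x => x * (d : X.E →₀ ℝ) e)

/-- The boundary of a 1-chain. -/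
noncomputable def boundary (c : ↥X.C1) : X.V →₀ ℝ :=
  (c : X.E →₀ ℝ).sum fun e x => x • (Finsupp.single (X.t e) (1:ℝ) - Finsupp.single (X.s e) 1)

/-- A 1-cycle is a 1-chain with vanishing boundary. -/
def IsCycle (c : ↥X.C1) : Prop := X.boundary c = 0

/-- An integral 1-chain: all coefficients are integers. -/
def IsIntegral (c : ↥X.C1) : Prop := ∀ e, ∃ n : ℤ, (c : X.E →₀ ℝ) e = (n : ℝ)

/-- The support of a 1-chain: the set of edges with positive coefficient. -/
def chainSupp (c : ↥X.C1) : Set X.E := {e | 0 < (c : X.E →₀ ℝ) e}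

/-- `p` is the orthogonal projection of `C₁(X,ℝ)` onto the space `Z₁(X,ℝ)` of 1-cycles:
it takes values in `Z₁(X,ℝ)` and `c - p c` is orthogonal to every 1-cycle. -/
def IsOrthoProj (p : ↥X.C1 → ↥X.C1) : Prop :=
  (∀ c, X.IsCycle (p c)) ∧ (∀ c z, X.IsCycle z → X.chainInner (c - p c) z = 0)

/-- Two paths from `x` to `y` are homologous if one can be obtained from the other
by repeatedly inserting or deleting subwords `e e⁻¹`, and/or replacing a subword
`στ` by `τσ` where `σ` and `τ` are loops based at the same vertex. -/
inductive Homologous : X.V → X.V → List X.E → List X.E → Prop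
  | refl {x y : X.V} (γ : List X.E) (h : X.IsPath x y γ) : Homologous x y γ γ
  | cancel {x y : X.V} (γ δ : List X.E) (e : X.E)
      (h : X.IsPath x y (γ ++ e :: X.inv e :: δ)) (h' : X.IsPath x y (γ ++ δ)) :
      Homologous x y (γ ++ e :: X.inv e :: δ) (γ ++ δ)
  | swap {x y : X.V} (γ σ τ δ : List X.E) (v : X.V)
      (hσ : X.IsPath v v σ) (hτ : X.IsPath v v τ)
      (h : X.IsPath x y (γ ++ (σ ++ (τ ++ δ))))
      (h' : X.IsPath x y (γ ++ (τ ++ (σ ++ δ)))) :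
      Homologous x y (γ ++ (σ ++ (τ ++ δ))) (γ ++ (τ ++ (σ ++ δ)))
  | symm {x y : X.V} {a b : List X.E} (h : Homologous x y a b) : Homologous x y b a
  | trans {x y : X.V} {a b c : List X.E} (h1 : Homologous x y a b)
      (h2 : Homologous x y b c) : Homologous x y a c

/-- A simple path: no vertex is visited twice. -/
def IsSimplePath (x y : X.V) (γ : List X.E) : Prop :=
  X.IsPath x y γ ∧ (x :: γ.map X.t).Nodup

/-- A simple loop based at `x`: a loop in which every vertex other than `x` occurs
at most once and `x` occurs only as the initial and final vertex. -/
def IsSimpleLoop (x : X.V) (γ : List X.E) : Prop :=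
  X.IsPath x x γ ∧ (x :: (γ.map X.t).dropLast).Nodup

/-- A reduced word: no subword of the form `e e⁻¹`. -/
def Reduced (γ : List X.E) : Prop := γ.Chain' (fun a b => b ≠ X.inv a)

/-- A spanning tree: a set of edges, closed under inversion, such that the spanning
subgraph it determines is connected and has no nonempty reduced loops. -/
def IsSpanningTree (S : Set X.E) : Prop :=
  (∀ e ∈ S, X.inv e ∈ S) ∧
  (∀ x y : X.V, ∃ γ : List X.E, X.IsPath x y γ ∧ ∀ e ∈ γ, e ∈ S) ∧
  (∀ (x : X.V) (γ : List X.E), X.IsPath x x γ → (∀ e ∈ γ, e ∈ S) → X.Reduced γ → γ = [])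

/-- The quotient of a set of 1-chains by the translation action of the
integral 1-cycles. -/
def transQuot (S : Set ↥X.C1) : Type :=
  Quot (fun a b : S => ∃ z : ↥X.C1, X.IsCycle z ∧ X.IsIntegral z ∧ (b : ↥X.C1) = (a : ↥X.C1) + z)

end SunadaGraph
namespace SunadaGraph

section Lemmas

variable {X : SunadaGraph}

/-- Concatenation of paths. -/
theorem IsPath.append {x y z : X.V} {γ δ : List X.E}
    (h1 : X.IsPath x y γ) : X.IsPath y z δ → X.IsPath x z (γ ++ δ) := by
  induction h1 with
  | nil _ => intro h2; simpa using h2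
  | cons e h ih => intro h2; exact .cons e (ih h2)

theorem isPath_single (X : SunadaGraph) (e : X.E) : X.IsPath (X.s e) (X.t e) [e] :=
  .cons e (.nil _)

theorem isPath_single' (X : SunadaGraph) (e : X.E) : X.IsPath (X.t e) (X.s e) [X.inv e] := by
  have := X.isPath_single (X.inv e)
  rwa [X.s_inv, X.t_inv] at this

/-- The endpoint of a path starting at `x`. -/
def endFrom (X : SunadaGraph) (x : X.V) (γ : List X.E) : X.V := γ.foldl (fun _ e => X.t e) x

theorem IsPath.endFrom_eq {x y : X.V} {γ : List X.E} (h : X.IsPath x y γ) :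
    X.endFrom x γ = y := by
  induction h with
  | nil x => rfl
  | cons e h ih => exact ih

/-- Homologous paths are paths with the same endpoints. -/
theorem Homologous.isPath {x y : X.V} {a b : List X.E} (h : X.Homologous x y a b) :
    X.IsPath x y a ∧ X.IsPath x y b := by
  induction h with
  | refl γ h => exact ⟨h, h⟩
  | cancel γ δ e h h' => exact ⟨h, h'⟩
  | swap γ σ τ δ v hσ hτ h h' => exact ⟨h, h'⟩
  | symm h ih => exact ⟨ih.2, ih.1⟩
  | trans h1 h2 ih1 ih2 => exact ⟨ih1.1, ih2.2⟩

/-- Appending a fixed path preserves homology. -/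
theorem Homologous.append_right {x y z : X.V} {a b c : List X.E}
    (h : X.Homologous x y a b) (hc : X.IsPath y z c) :
    X.Homologous x z (a ++ c) (b ++ c) := by
  induction h with
  | refl γ hγ => exact .refl _ (hγ.append hc)
  | cancel γ δ e h h' =>
      have h1 : X.IsPath x z (γ ++ e :: X.inv e :: (δ ++ c)) := by
        have := h.append hc; simpa using this
      have h2 : X.IsPath x z (γ ++ (δ ++ c)) := by
        have := h'.append hc; simpa using this
      have := Homologous.cancel γ (δ ++ c) e h1 h2
      simpa using this
  | swap γ σ τ δ v hσ hτ h h' =>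
      have h1 : X.IsPath x z (γ ++ (σ ++ (τ ++ (δ ++ c)))) := by
        have := h.append hc; simpa using this
      have h2 : X.IsPath x z (γ ++ (τ ++ (σ ++ (δ ++ c)))) := by
        have := h'.append hc; simpa using this
      have := Homologous.swap γ σ τ (δ ++ c) v hσ hτ h1 h2
      simpa using this
  | symm h ih => exact ih.symm
  | trans h1 h2 ih1 ih2 => exact ih1.trans ih2

/-- Prepending a fixed path preserves homology. -/
theorem Homologous.prepend_left {w x y : X.V} {a b c : List X.E}
    (hc : X.IsPath w x c) (h : X.Homologous x y a b) :
    X.Homologous w y (c ++ a) (c ++ b) := by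
  induction h with
  | refl γ hγ => exact .refl _ (hc.append hγ)
  | cancel γ δ e h h' =>
      have h1 : X.IsPath w y ((c ++ γ) ++ e :: X.inv e :: δ) := by
        have := hc.append h; simpa using this
      have h2 : X.IsPath w y ((c ++ γ) ++ δ) := by
        have := hc.append h'; simpa using this
      have := Homologous.cancel (c ++ γ) δ e h1 h2
      simpa using this
  | swap γ σ τ δ v hσ hτ h h' =>
      have h1 : X.IsPath w y ((c ++ γ) ++ (σ ++ (τ ++ δ))) := by
        have := hc.append h; simpa using this
      have h2 : X.IsPath w y ((c ++ γ) ++ (τ ++ (σ ++ δ))) := by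
        have := hc.append h'; simpa using this
      have := Homologous.swap (c ++ γ) σ τ δ v hσ hτ h1 h2
      simpa using this
  | symm h ih => exact ih.symm
  | trans h1 h2 ih1 ih2 => exact ih1.trans ih2

/-- The reverse of a word of edges: reverse the order and invert each edge. -/
def revP (X : SunadaGraph) (γ : List X.E) : List X.E := (γ.map X.inv).reverse

theorem IsPath.revP {x y : X.V} {γ : List X.E} (h : X.IsPath x y γ) :
    X.IsPath y x (X.revP γ) := by
  induction h with
  | nil x => exact .nil x
  | cons e h ih =>
      have := ih.append (X.isPath_single' e)
      simpa [SunadaGraph.revP] using this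

theorem Homologous.revP {x y : X.V} {a b : List X.E} (h : X.Homologous x y a b) :
    X.Homologous y x (X.revP a) (X.revP b) := by
  induction h with
  | refl γ hγ => exact .refl _ hγ.revP
  | cancel γ δ e h h' =>
      have key : X.revP (γ ++ e :: X.inv e :: δ) = X.revP δ ++ e :: X.inv e :: X.revP γ := by
        simp [SunadaGraph.revP, X.inv_inv]
      have key2 : X.revP (γ ++ δ) = X.revP δ ++ X.revP γ := by
        simp [SunadaGraph.revP]
      have p1 : X.IsPath y x (X.revP δ ++ e :: X.inv e :: X.revP γ) := by
        have := h.revP; rwa [key] at this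
      have p2 : X.IsPath y x (X.revP δ ++ X.revP γ) := by
        have := h'.revP; rwa [key2] at this
      rw [key, key2]
      exact Homologous.cancel _ _ _ p1 p2
  | swap γ σ τ δ v hσ hτ h h' =>
      have key : X.revP (γ ++ (σ ++ (τ ++ δ)))
          = X.revP δ ++ (X.revP τ ++ (X.revP σ ++ X.revP γ)) := by
        simp [SunadaGraph.revP]
      have key2 : X.revP (γ ++ (τ ++ (σ ++ δ)))
          = X.revP δ ++ (X.revP σ ++ (X.revP τ ++ X.revP γ)) := by
        simp [SunadaGraph.revP]
      have p1 : X.IsPath y x (X.revP δ ++ (X.revP τ ++ (X.revP σ ++ X.revP γ))) := by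
        have := h.revP; rwa [key] at this
      have p2 : X.IsPath y x (X.revP δ ++ (X.revP σ ++ (X.revP τ ++ X.revP γ))) := by
        have := h'.revP; rwa [key2] at this
      rw [key, key2]
      exact Homologous.swap _ _ _ _ v hτ.revP hσ.revP p1 p2
  | symm h ih => exact ih.symm
  | trans h1 h2 ih1 ih2 => exact ih1.trans ih2

/-- `γ⁻¹ γ` is homologous to the trivial path. -/
theorem homologous_revP_append {x y : X.V} {γ : List X.E} (h : X.IsPath x y γ) :
    X.Homologous y y (X.revP γ ++ γ) [] := by
  induction h with
  | nil x => exact .refl [] (.nil x)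
  | @cons e y' γ' h ih =>
      have p0 : X.IsPath (X.t e) y' (X.inv e :: e :: γ') := by
        have tail : X.IsPath (X.t (X.inv e)) y' (e :: γ') := by
          rw [X.t_inv]; exact .cons e h
        have := IsPath.cons (X.inv e) tail
        rwa [X.s_inv] at this
      have p1 : X.IsPath y' y' (X.revP γ' ++ X.inv e :: e :: γ') := h.revP.append p0
      have p2 : X.IsPath y' y' (X.revP γ' ++ γ') := h.revP.append h
      have step : X.Homologous y' y' (X.revP γ' ++ X.inv e :: e :: γ') (X.revP γ' ++ γ') := by
        have := Homologous.cancel (X.revP γ') γ' (X.inv e)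
          (by rwa [X.inv_inv]) (by exact p2)
        rwa [X.inv_inv] at this
      have goal_eq : X.revP (e :: γ') ++ e :: γ' = X.revP γ' ++ X.inv e :: e :: γ' := by
        simp [SunadaGraph.revP]
      rw [goal_eq]
      exact step.trans ih

end Lemmas

end SunadaGraph
namespace SunadaGraph

/-- A map of graphs. -/
structure Hom (X Y : SunadaGraph) where
  vMap : X.V → Y.V
  eMap : X.E → Y.E
  map_s : ∀ e, Y.s (eMap e) = vMap (X.s e)
  map_t : ∀ e, Y.t (eMap e) = vMap (X.t e)
  map_inv : ∀ e, Y.inv (eMap e) = eMap (X.inv e)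

/-- Composition of maps of graphs. -/
def Hom.comp {X Y Z : SunadaGraph} (f : Hom Y Z) (g : Hom X Y) : Hom X Z where
  vMap := fun v => f.vMap (g.vMap v)
  eMap := fun e => f.eMap (g.eMap e)
  map_s := fun e => by rw [f.map_s, g.map_s]
  map_t := fun e => by rw [f.map_t, g.map_t]
  map_inv := fun e => by rw [f.map_inv, g.map_inv]

/-- The identity map of graphs. -/
def Hom.idHom (X : SunadaGraph) : Hom X X :=
  ⟨fun v => v, fun e => e, fun _ => rfl, fun _ => rfl, fun _ => rfl⟩

theorem IsPath.map {X Y : SunadaGraph} {x y : X.V} {γ : List X.E}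
    (h : X.IsPath x y γ) (f : Hom X Y) :
    Y.IsPath (f.vMap x) (f.vMap y) (γ.map f.eMap) := by
  induction h with
  | nil x => exact .nil _
  | cons e h ih =>
      rw [← f.map_t] at ih
      have := IsPath.cons (f.eMap e) ih
      rwa [f.map_s] at this

/-- An automorphism of a graph. -/
structure Aut (X : SunadaGraph) where
  toHom : Hom X X
  invHom : Hom X X
  left_inv : Hom.comp invHom toHom = Hom.idHom X
  right_inv : Hom.comp toHom invHom = Hom.idHom X

theorem Aut.ext' {X : SunadaGraph} {f g : Aut X} (h : f.toHom = g.toHom) : f = g := by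
  obtain ⟨ft, fi, fl, fr⟩ := f
  obtain ⟨gt, gi, gl, gr⟩ := g
  simp only at h
  subst h
  have key : fi = gi := by
    calc fi = Hom.comp fi (Hom.idHom X) := rfl
      _ = Hom.comp fi (Hom.comp ft gi) := by rw [gr]
      _ = Hom.comp (Hom.comp fi ft) gi := rfl
      _ = Hom.comp (Hom.idHom X) gi := by rw [fl]
      _ = gi := rfl
  subst key
  rfl

/-- The automorphism group of a graph. -/
instance (X : SunadaGraph) : Group (Aut X) where
  mul f g := ⟨Hom.comp f.toHom g.toHom, Hom.comp g.invHom f.invHom,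
    by
      show Hom.comp (Hom.comp g.invHom f.invHom) (Hom.comp f.toHom g.toHom) = Hom.idHom X
      calc Hom.comp (Hom.comp g.invHom f.invHom) (Hom.comp f.toHom g.toHom)
          = Hom.comp g.invHom (Hom.comp (Hom.comp f.invHom f.toHom) g.toHom) := rfl
        _ = Hom.comp g.invHom (Hom.comp (Hom.idHom X) g.toHom) := by rw [f.left_inv]
        _ = Hom.comp g.invHom g.toHom := rfl
        _ = Hom.idHom X := g.left_inv,
    by
      show Hom.comp (Hom.comp f.toHom g.toHom) (Hom.comp g.invHom f.invHom) = Hom.idHom X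
      calc Hom.comp (Hom.comp f.toHom g.toHom) (Hom.comp g.invHom f.invHom)
          = Hom.comp f.toHom (Hom.comp (Hom.comp g.toHom g.invHom) f.invHom) := rfl
        _ = Hom.comp f.toHom (Hom.comp (Hom.idHom X) f.invHom) := by rw [g.right_inv]
        _ = Hom.comp f.toHom f.invHom := rfl
        _ = Hom.idHom X := f.right_inv⟩
  one := ⟨Hom.idHom X, Hom.idHom X, rfl, rfl⟩
  inv f := ⟨f.invHom, f.toHom, f.right_inv, f.left_inv⟩
  mul_assoc f g h := Aut.ext' rfl
  one_mul f := Aut.ext' rfl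
  mul_one f := Aut.ext' rfl
  inv_mul_cancel f := Aut.ext' f.left_inv

variable (X : SunadaGraph)

/-- Paths in `X` starting at the basepoint `x₀`. -/
def PathFrom (x₀ : X.V) : Type := {γ : List X.E // ∃ y, X.IsPath x₀ y γ}

/-- Two paths from the basepoint are related if they are homologous. -/
def AtomRel (x₀ : X.V) (a b : X.PathFrom x₀) : Prop := ∃ y, X.Homologous x₀ y a.1 b.1

/-- The atoms: homology classes of paths starting at the basepoint.  These are the
vertices of the maximal abelian cover. -/
def Atom (x₀ : X.V) : Type := Quot (X.AtomRel x₀)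

/-- Data for an edge of the maximal abelian cover: a path `α` from the basepoint
together with an edge `e` with `s(e)` the endpoint of `α`. -/
def BarBase (x₀ : X.V) : Type := {q : List X.E × X.E // X.IsPath x₀ (X.s q.2) q.1}

def BarRel (x₀ : X.V) (q q' : X.BarBase x₀) : Prop :=
  q.1.2 = q'.1.2 ∧ X.Homologous x₀ (X.s q.1.2) q.1.1 q'.1.1

/-- The edges of the maximal abelian cover. -/
def BarEdge (x₀ : X.V) : Type := Quot (X.BarRel x₀)

def barS (x₀ : X.V) : X.BarEdge x₀ → X.Atom x₀ :=
  Quot.lift (fun q => Quot.mk _ ⟨q.1.1, ⟨X.s q.1.2, q.2⟩⟩)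
    (fun q q' h => Quot.sound ⟨X.s q.1.2, h.2⟩)

def barT (x₀ : X.V) : X.BarEdge x₀ → X.Atom x₀ :=
  Quot.lift
    (fun q => Quot.mk _ ⟨q.1.1 ++ [q.1.2], ⟨X.t q.1.2, q.2.append (X.isPath_single q.1.2)⟩⟩)
    (fun q q' h => by
      apply Quot.sound
      refine ⟨X.t q.1.2, ?_⟩
      show X.Homologous x₀ (X.t q.1.2) (q.1.1 ++ [q.1.2]) (q'.1.1 ++ [q'.1.2])
      rw [← h.1]
      exact Homologous.append_right h.2 (X.isPath_single q.1.2))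

def barInv (x₀ : X.V) : X.BarEdge x₀ → X.BarEdge x₀ :=
  Quot.lift
    (fun q => Quot.mk _ ⟨(q.1.1 ++ [q.1.2], X.inv q.1.2), by
      rw [X.s_inv]; exact q.2.append (X.isPath_single q.1.2)⟩)
    (fun q q' h => by
      apply Quot.sound
      constructor
      · show X.inv q.1.2 = X.inv q'.1.2
        rw [h.1]
      · show X.Homologous x₀ (X.s (X.inv q.1.2)) (q.1.1 ++ [q.1.2]) (q'.1.1 ++ [q'.1.2])
        rw [X.s_inv, ← h.1]
        exact Homologous.append_right h.2 (X.isPath_single q.1.2))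

def eproj (x₀ : X.V) : X.BarEdge x₀ → X.E := Quot.lift (fun q => q.1.2) (fun _ _ h => h.1)

def atomEnd (x₀ : X.V) : X.Atom x₀ → X.V :=
  Quot.lift (fun γ => X.endFrom x₀ γ.1)
    (fun a b h => by
      show X.endFrom x₀ a.1 = X.endFrom x₀ b.1
      obtain ⟨y, hy⟩ := h
      obtain ⟨ha, hb⟩ := hy.isPath
      rw [ha.endFrom_eq, hb.endFrom_eq])

private theorem isPath_pair (e : X.E) : X.IsPath (X.s e) (X.s e) [e, X.inv e] := by
  have tail : X.IsPath (X.t (X.inv e)) (X.s e) [] := by rw [X.t_inv]; exact .nil _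
  have mid : X.IsPath (X.t e) (X.s e) [X.inv e] := by
    have := IsPath.cons (X.inv e) tail
    rwa [X.s_inv] at this
  exact .cons e mid

private theorem hom_cancel_pair (x₀ : X.V) (q : X.BarBase x₀) :
    X.Homologous x₀ (X.s q.1.2) ((q.1.1 ++ [q.1.2]) ++ [X.inv q.1.2]) q.1.1 := by
  have p1 : X.IsPath x₀ (X.s q.1.2) (q.1.1 ++ q.1.2 :: X.inv q.1.2 :: []) :=
    q.2.append (X.isPath_pair q.1.2)
  have p2 : X.IsPath x₀ (X.s q.1.2) (q.1.1 ++ []) := by simpa using q.2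
  have := Homologous.cancel q.1.1 [] q.1.2 p1 p2
  simpa using this

/-- The maximal abelian cover of `X` relative to the basepoint `x₀`. -/
def Bar (x₀ : X.V) : SunadaGraph where
  V := X.Atom x₀
  E := X.BarEdge x₀
  s := X.barS x₀
  t := X.barT x₀
  inv := X.barInv x₀
  s_inv := fun e =>
    @Quot.ind _ _ (fun e => X.barS x₀ (X.barInv x₀ e) = X.barT x₀ e)
      (fun q => rfl) e
  t_inv := fun e =>
    @Quot.ind _ _ (fun e => X.barT x₀ (X.barInv x₀ e) = X.barS x₀ e)
      (fun q => Quot.sound ⟨X.s q.1.2, by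
        show X.Homologous x₀ (X.s q.1.2) ((q.1.1 ++ [q.1.2]) ++ [X.inv q.1.2]) q.1.1
        exact X.hom_cancel_pair x₀ q⟩) e
  inv_inv := fun e =>
    @Quot.ind _ _ (fun e => X.barInv x₀ (X.barInv x₀ e) = e)
      (fun q => Quot.sound ⟨by show X.inv (X.inv q.1.2) = q.1.2; rw [X.inv_inv], by
        show X.Homologous x₀ (X.s (X.inv (X.inv q.1.2)))
          ((q.1.1 ++ [q.1.2]) ++ [X.inv q.1.2]) q.1.1
        rw [X.inv_inv]
        exact X.hom_cancel_pair x₀ q⟩) e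
  inv_ne := fun e =>
    @Quot.ind _ _ (fun e => X.barInv x₀ e ≠ e)
      (fun q h => X.inv_ne q.1.2 (congrArg (X.eproj x₀) h)) e

/-- The covering map from the maximal abelian cover to `X`. -/
def proj (x₀ : X.V) : Hom (X.Bar x₀) X where
  vMap := X.atomEnd x₀
  eMap := X.eproj x₀
  map_s := fun e =>
    @Quot.ind _ _ (fun e => X.s (X.eproj x₀ e) = X.atomEnd x₀ (X.barS x₀ e))
      (fun q => (q.2.endFrom_eq).symm) e
  map_t := fun e =>
    @Quot.ind _ _ (fun e => X.t (X.eproj x₀ e) = X.atomEnd x₀ (X.barT x₀ e))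
      (fun q => ((q.2.append (X.isPath_single q.1.2)).endFrom_eq).symm) e
  map_inv := fun e =>
    @Quot.ind _ _ (fun e => X.inv (X.eproj x₀ e) = X.eproj x₀ (X.barInv x₀ e))
      (fun q => rfl) e

/-- `g` covers `f` when `q ∘ g = f ∘ q`. -/
def Covers (x₀ : X.V) (g : Aut (X.Bar x₀)) (f : Aut X) : Prop :=
  Hom.comp (X.proj x₀) g.toHom = Hom.comp f.toHom (X.proj x₀)

/-- The group of covering symmetries: automorphisms of the maximal abelian cover
that cover some automorphism of `X`. -/
def Cov (x₀ : X.V) : Subgroup (Aut (X.Bar x₀)) where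
  carrier := {g | ∃ f : Aut X, X.Covers x₀ g f}
  one_mem' := ⟨1, rfl⟩
  mul_mem' := by
    rintro a b ⟨f, hf⟩ ⟨f', hf'⟩
    refine ⟨f * f', ?_⟩
    show Hom.comp (X.proj x₀) (Hom.comp a.toHom b.toHom)
        = Hom.comp (Hom.comp f.toHom f'.toHom) (X.proj x₀)
    calc Hom.comp (X.proj x₀) (Hom.comp a.toHom b.toHom)
        = Hom.comp (Hom.comp (X.proj x₀) a.toHom) b.toHom := rfl
      _ = Hom.comp (Hom.comp f.toHom (X.proj x₀)) b.toHom := by rw [hf]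
      _ = Hom.comp f.toHom (Hom.comp (X.proj x₀) b.toHom) := rfl
      _ = Hom.comp f.toHom (Hom.comp f'.toHom (X.proj x₀)) := by rw [hf']
      _ = Hom.comp (Hom.comp f.toHom f'.toHom) (X.proj x₀) := rfl
  inv_mem' := by
    rintro a ⟨f, hf⟩
    refine ⟨f⁻¹, ?_⟩
    show Hom.comp (X.proj x₀) a.invHom = Hom.comp f.invHom (X.proj x₀)
    have key : Hom.comp (Hom.comp f.invHom (X.proj x₀)) a.toHom = X.proj x₀ := by
      calc Hom.comp (Hom.comp f.invHom (X.proj x₀)) a.toHom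
          = Hom.comp f.invHom (Hom.comp (X.proj x₀) a.toHom) := rfl
        _ = Hom.comp f.invHom (Hom.comp f.toHom (X.proj x₀)) := by rw [hf]
        _ = Hom.comp (Hom.comp f.invHom f.toHom) (X.proj x₀) := rfl
        _ = Hom.comp (Hom.idHom X) (X.proj x₀) := by rw [f.left_inv]
        _ = X.proj x₀ := rfl
    calc Hom.comp (X.proj x₀) a.invHom
        = Hom.comp (Hom.comp (Hom.comp f.invHom (X.proj x₀)) a.toHom) a.invHom := by rw [key]
      _ = Hom.comp (Hom.comp f.invHom (X.proj x₀)) (Hom.comp a.toHom a.invHom) := rfl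
      _ = Hom.comp (Hom.comp f.invHom (X.proj x₀)) (Hom.idHom _) := by rw [a.right_inv]
      _ = Hom.comp f.invHom (X.proj x₀) := rfl

end SunadaGraph
namespace SunadaGraph

variable (X : SunadaGraph)

/-- Loops based at `x₀`. -/
def LoopAt (x₀ : X.V) : Type := {γ : List X.E // X.IsPath x₀ x₀ γ}

def H1Rel (x₀ : X.V) (a b : X.LoopAt x₀) : Prop := X.Homologous x₀ x₀ a.1 b.1

/-- The group of homology classes of loops based at `x₀`, with composition as
the group operation: this is `H₁(X,ℤ)`. -/
def H1 (x₀ : X.V) : Type := Quot (X.H1Rel x₀)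

def h1one (x₀ : X.V) : X.H1 x₀ := Quot.mk _ ⟨[], .nil x₀⟩

def h1mul (x₀ : X.V) : X.H1 x₀ → X.H1 x₀ → X.H1 x₀ :=
  Quot.lift
    (fun a => Quot.lift
      (fun b => Quot.mk (X.H1Rel x₀) ⟨a.1 ++ b.1, a.2.append b.2⟩)
      (fun b b' hb => Quot.sound (Homologous.prepend_left a.2 hb)))
    (fun a a' ha => by
      funext b
      refine @Quot.ind _ _
        (fun b => Quot.lift _ _ b = Quot.lift _ _ b) (fun b => ?_) b
      exact Quot.sound (ha.append_right b.2))

def h1inv (x₀ : X.V) : X.H1 x₀ → X.H1 x₀ :=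
  Quot.lift (fun a => Quot.mk (X.H1Rel x₀) ⟨X.revP a.1, a.2.revP⟩)
    (fun a a' h => Quot.sound h.revP)

theorem h1mul_assoc (x₀ : X.V) (a b c : X.H1 x₀) :
    X.h1mul x₀ (X.h1mul x₀ a b) c = X.h1mul x₀ a (X.h1mul x₀ b c) := by
  refine @Quot.ind _ _
    (fun a => ∀ b c, X.h1mul x₀ (X.h1mul x₀ a b) c = X.h1mul x₀ a (X.h1mul x₀ b c))
    (fun a => ?_) a b c
  intro b c
  refine @Quot.ind _ _
    (fun b => ∀ c, X.h1mul x₀ (X.h1mul x₀ (Quot.mk _ a) b) c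
      = X.h1mul x₀ (Quot.mk _ a) (X.h1mul x₀ b c)) (fun b => ?_) b c
  intro c
  refine @Quot.ind _ _
    (fun c => X.h1mul x₀ (X.h1mul x₀ (Quot.mk _ a) (Quot.mk _ b)) c
      = X.h1mul x₀ (Quot.mk _ a) (X.h1mul x₀ (Quot.mk _ b) c)) (fun c => ?_) c
  exact congrArg (Quot.mk _) (Subtype.ext (List.append_assoc a.1 b.1 c.1))

theorem h1_one_mul (x₀ : X.V) (a : X.H1 x₀) : X.h1mul x₀ (X.h1one x₀) a = a := by
  refine @Quot.ind _ _ (fun a => X.h1mul x₀ (X.h1one x₀) a = a) (fun a => ?_) a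
  rfl

theorem h1_mul_one (x₀ : X.V) (a : X.H1 x₀) : X.h1mul x₀ a (X.h1one x₀) = a := by
  refine @Quot.ind _ _ (fun a => X.h1mul x₀ a (X.h1one x₀) = a) (fun a => ?_) a
  exact congrArg (Quot.mk _) (Subtype.ext (List.append_nil a.1))

theorem h1_inv_mul (x₀ : X.V) (a : X.H1 x₀) :
    X.h1mul x₀ (X.h1inv x₀ a) a = X.h1one x₀ := by
  refine @Quot.ind _ _ (fun a => X.h1mul x₀ (X.h1inv x₀ a) a = X.h1one x₀)
    (fun a => ?_) a
  exact Quot.sound (homologous_revP_append a.2)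

instance instGroupH1 (x₀ : X.V) : Group (X.H1 x₀) where
  one := X.h1one x₀
  mul := X.h1mul x₀
  inv := X.h1inv x₀
  mul_assoc := X.h1mul_assoc x₀
  one_mul := X.h1_one_mul x₀
  mul_one := X.h1_mul_one x₀
  inv_mul_cancel := X.h1_inv_mul x₀

theorem boundary_add (c d : ↥X.C1) : X.boundary (c + d) = X.boundary c + X.boundary d := by
  show Finsupp.sum ((c : X.E →₀ ℝ) + (d : X.E →₀ ℝ)) _ = _
  exact Finsupp.sum_add_index' (fun e => zero_smul ℝ _) (fun e x y => add_smul x y _)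

theorem boundary_smul (r : ℝ) (c : ↥X.C1) : X.boundary (r • c) = r • X.boundary c := by
  unfold boundary
  have hc : ((r • c : ↥X.C1) : X.E →₀ ℝ) = r • (c : X.E →₀ ℝ) := rfl
  rw [hc, Finsupp.sum_smul_index, Finsupp.smul_sum]
  · exact Finsupp.sum_congr fun e _ => by rw [mul_smul]
  · intro e
    exact zero_smul ℝ _

theorem boundary_zero : X.boundary 0 = 0 := by
  show Finsupp.sum (0 : X.E →₀ ℝ) _ = 0
  exact Finsupp.sum_zero_index

/-- The space `Z₁(X,ℝ)` of 1-cycles, as a subspace of `C₁(X,ℝ)`. -/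
noncomputable def Z1 : Submodule ℝ ↥X.C1 where
  carrier := {c | X.IsCycle c}
  add_mem' := fun {a b} ha hb => by
    show X.IsCycle (a + b)
    unfold IsCycle at *
    rw [X.boundary_add, ha, hb, add_zero]
  zero_mem' := X.boundary_zero
  smul_mem' := fun r c hc => by
    show X.IsCycle (r • c)
    unfold IsCycle at *
    rw [X.boundary_smul, hc, smul_zero]

/-- A map of the space of 1-cycles is affine if it is a linear map followed by
a translation. -/
def IsAffine (T : ↥X.Z1 → ↥X.Z1) : Prop :=
  ∃ (L : ↥X.Z1 →ₗ[ℝ] ↥X.Z1) (v : ↥X.Z1), ∀ c, T c = v + L c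

/-- The permutation of edges induced by an automorphism. -/
def eEquiv (f : X.Aut) : X.E ≃ X.E where
  toFun := f.toHom.eMap
  invFun := f.invHom.eMap
  left_inv := fun e => congrFun (congrArg Hom.eMap f.left_inv) e
  right_inv := fun e => congrFun (congrArg Hom.eMap f.right_inv) e

/-- The linear action `f_*` of an automorphism `f` on 1-chains, with
`f_*(e) = f(e)` for every edge. -/
noncomputable def pushChain (f : X.Aut) (c : ↥X.C1) : ↥X.C1 :=
  ⟨Finsupp.equivMapDomain (X.eEquiv f) (c : X.E →₀ ℝ), by
    intro e
    rw [Finsupp.equivMapDomain_apply, Finsupp.equivMapDomain_apply]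
    have h1 : (X.eEquiv f).symm (X.inv e) = X.inv ((X.eEquiv f).symm e) := by
      show f.invHom.eMap (X.inv e) = X.inv (f.invHom.eMap e)
      exact (f.invHom.map_inv e).symm
    rw [h1]
    exact c.2 _⟩

/-- The image of the atom `⟦δ⟧` under the covering symmetry determined by the
pair `(f, ⟦β⟧)`: the atom `⟦β f(δ)⟧`. -/
def mapPathFrom (x₀ : X.V) (f : X.Aut) (β : List X.E)
    (hβ : X.IsPath x₀ (f.toHom.vMap x₀) β) (δ : X.PathFrom x₀) : X.PathFrom x₀ :=
  ⟨β ++ δ.1.map f.toHom.eMap, by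
    obtain ⟨y, hy⟩ := δ.2
    exact ⟨f.toHom.vMap y, hβ.append (hy.map f.toHom)⟩⟩

/-- The image of the edge `(⟦α⟧, e)` under the covering symmetry determined by the
pair `(f, ⟦β⟧)`: the edge `(⟦β f(α)⟧, f(e))`. -/
def mapBarBase (x₀ : X.V) (f : X.Aut) (β : List X.E)
    (hβ : X.IsPath x₀ (f.toHom.vMap x₀) β) (q : X.BarBase x₀) : X.BarBase x₀ :=
  ⟨(β ++ q.1.1.map f.toHom.eMap, f.toHom.eMap q.1.2), by
    show X.IsPath x₀ (X.s (f.toHom.eMap q.1.2)) _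
    rw [f.toHom.map_s]
    exact hβ.append (q.2.map f.toHom)⟩

/-- The automorphism `g` of the maximal abelian cover acts as the pair `(f, ⟦β⟧)`:
it maps each atom `⟦α⟧` to `⟦β f(α)⟧` and each edge `(⟦α⟧, e)` to `(⟦β f(α)⟧, f(e))`. -/
def ActsAs (x₀ : X.V) (g : Aut (X.Bar x₀)) (f : X.Aut) (β : List X.E) : Prop :=
  ∃ hβ : X.IsPath x₀ (f.toHom.vMap x₀) β,
    (∀ δ : X.PathFrom x₀,
      g.toHom.vMap (Quot.mk _ δ) = Quot.mk _ (X.mapPathFrom x₀ f β hβ δ)) ∧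
    (∀ q : X.BarBase x₀,
      g.toHom.eMap (Quot.mk _ q) = Quot.mk _ (X.mapBarBase x₀ f β hβ q))

/-- The automorphism `g` of the maximal abelian cover is the deck transformation
determined by the loop `γ` based at `x₀`: it maps each atom `⟦δ⟧` to `⟦γδ⟧`. -/
def IsDeck (x₀ : X.V) (g : Aut (X.Bar x₀)) (γ : X.LoopAt x₀) : Prop :=
  ∀ δ : X.PathFrom x₀, g.toHom.vMap (Quot.mk _ δ) =
    Quot.mk _ (⟨γ.1 ++ δ.1, by
      obtain ⟨y, hy⟩ := δ.2
      exact ⟨y, γ.2.append hy⟩⟩ : X.PathFrom x₀)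

/-- `ρ` is an action of the group of covering symmetries by affine transformations
of `Z₁(X,ℝ)` for which the embedding of the atoms is equivariant:
`ρ(g)(i(⟦α⟧)) = i(g(⟦α⟧))`. -/
def GoodAction (x₀ : X.V) (π : ↥X.C1 → ↥X.C1)
    (ρ : ↥(X.Cov x₀) → (↥X.Z1 → ↥X.Z1)) : Prop :=
  ρ 1 = id ∧ (∀ g h, ρ (g * h) = ρ g ∘ ρ h) ∧ (∀ g, X.IsAffine (ρ g)) ∧
  ∀ (g : ↥(X.Cov x₀)) (α δ : X.PathFrom x₀),
    g.1.toHom.vMap (Quot.mk _ α) = Quot.mk _ δ →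
    ∀ z w : ↥X.Z1, (z : ↥X.C1) = π (X.pathChain α.1) →
      (w : ↥X.C1) = π (X.pathChain δ.1) → ρ g z = w

end SunadaGraph



section AuxChain

namespace SunadaGraph

variable {X : SunadaGraph}

attribute [local instance] Classical.propDecidable

noncomputable local instance : DecidableEq X.E := Classical.decEq _

theorem pathChain_nil : X.pathChain [] = 0 := rfl

theorem pathChain_cons (e : X.E) (l : List X.E) :
    X.pathChain (e :: l) = X.edgeChain e + X.pathChain l := by
  simp [SunadaGraph.pathChain]

theorem pathChain_append (a b : List X.E) :
    X.pathChain (a ++ b) = X.pathChain a + X.pathChain b := by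
  simp [SunadaGraph.pathChain]

theorem edgeChain_inv (e : X.E) : X.edgeChain (X.inv e) = - X.edgeChain e := by
  apply Subtype.ext
  show (Finsupp.single (X.inv e) 1 - Finsupp.single (X.inv (X.inv e)) 1 : X.E →₀ ℝ)
      = -(Finsupp.single e 1 - Finsupp.single (X.inv e) 1)
  rw [X.inv_inv]
  abel

theorem revP_nil : X.revP [] = [] := rfl

theorem revP_cons (e : X.E) (l : List X.E) :
    X.revP (e :: l) = X.revP l ++ [X.inv e] := by
  simp [SunadaGraph.revP]

theorem revP_append (a b : List X.E) :
    X.revP (a ++ b) = X.revP b ++ X.revP a := by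
  simp [SunadaGraph.revP]

theorem revP_revP (l : List X.E) : X.revP (X.revP l) = l := by
  simp only [SunadaGraph.revP, List.map_reverse, List.reverse_reverse, List.map_map]
  have : X.inv ∘ X.inv = id := funext fun e => X.inv_inv e
  rw [this, List.map_id]

theorem pathChain_revP (l : List X.E) : X.pathChain (X.revP l) = - X.pathChain l := by
  induction l with
  | nil => rw [revP_nil, pathChain_nil]; exact (neg_zero (G := ↥X.C1)).symm
  | cons e l ih =>
      rw [revP_cons, pathChain_append, pathChain_cons, ih, pathChain_cons,
        pathChain_nil, edgeChain_inv]
      abel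

theorem homologous_pathChain {x y : X.V} {a b : List X.E} (h : X.Homologous x y a b) :
    X.pathChain a = X.pathChain b := by
  induction h with
  | refl γ h => rfl
  | cancel γ δ e h h' =>
      rw [pathChain_append, pathChain_append, pathChain_cons, pathChain_cons,
        edgeChain_inv]
      abel
  | swap γ σ τ δ v hσ hτ h h' =>
      simp only [pathChain_append]
      abel
  | symm h ih => exact ih.symm
  | trans h1 h2 ih1 ih2 => exact ih1.trans ih2

theorem coe_pathChain_apply (l : List X.E) (f : X.E) :
    ((X.pathChain l : ↥X.C1) : X.E →₀ ℝ) f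
      = (l.count f : ℝ) - (l.count (X.inv f) : ℝ) := by
  induction l with
  | nil => simp [pathChain_nil]
  | cons e l ih =>
      have hco : ((X.pathChain (e :: l) : ↥X.C1) : X.E →₀ ℝ) f
          = ((X.edgeChain e : ↥X.C1) : X.E →₀ ℝ) f
            + ((X.pathChain l : ↥X.C1) : X.E →₀ ℝ) f := by
        rw [pathChain_cons]; rfl
      have hinv : (X.inv e = f) ↔ (e = X.inv f) := by
        constructor
        · rintro rfl; exact (X.inv_inv e).symm
        · rintro rfl; exact X.inv_inv f
      rw [hco, ih]
      show (Finsupp.single e 1 - Finsupp.single (X.inv e) 1 : X.E →₀ ℝ) f + _ = _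
      rw [Finsupp.sub_apply, Finsupp.single_apply, Finsupp.single_apply]
      rw [List.count_cons, List.count_cons]
      simp only [hinv, beq_iff_eq]
      push_cast
      by_cases h1 : e = f <;> by_cases h2 : e = X.inv f <;>
        simp [h1, h2] <;> ring

theorem boundary_edgeChain (e : X.E) :
    X.boundary (X.edgeChain e)
      = (2:ℝ) • (Finsupp.single (X.t e) (1:ℝ) - Finsupp.single (X.s e) 1) := by
  show Finsupp.sum (Finsupp.single e 1 - Finsupp.single (X.inv e) 1 : X.E →₀ ℝ) _ = _
  have : (Finsupp.single e 1 - Finsupp.single (X.inv e) 1 : X.E →₀ ℝ)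
      = Finsupp.single e 1 + Finsupp.single (X.inv e) (-1) := by
    rw [Finsupp.single_neg]; abel
  rw [this, Finsupp.sum_add_index' (fun a => by simp) (fun a b₁ b₂ => by
    exact add_smul b₁ b₂ _), Finsupp.sum_single_index (by simp),
    Finsupp.sum_single_index (by simp), X.t_inv, X.s_inv]
  simp only [one_smul, neg_smul]
  rw [two_smul]
  abel

theorem boundary_neg (c : ↥X.C1) : X.boundary (-c) = - X.boundary c := by
  have h := X.boundary_smul (-1 : ℝ) c
  have e1 : (-1 : ℝ) • c = -c := neg_one_smul ℝ c
  have e2 : (-1 : ℝ) • X.boundary c = -X.boundary c := neg_one_smul ℝ _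
  rw [e1, e2] at h
  exact h

theorem boundary_sub (c d : ↥X.C1) : X.boundary (c - d) = X.boundary c - X.boundary d := by
  have e1 : c - d = c + -d := sub_eq_add_neg c d
  rw [e1, X.boundary_add, boundary_neg, ← sub_eq_add_neg]

theorem boundary_pathChain {u v : X.V} {l : List X.E} (h : X.IsPath u v l) :
    X.boundary (X.pathChain l)
      = (2:ℝ) • (Finsupp.single v (1:ℝ) - Finsupp.single u 1) := by
  induction h with
  | nil x => rw [pathChain_nil, X.boundary_zero]; simp
  | cons e h ih =>
      rw [pathChain_cons, X.boundary_add, boundary_edgeChain, ih]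
      rw [smul_sub, smul_sub, smul_sub]
      abel

theorem isCycle_pathChain_loop {x : X.V} {l : List X.E} (h : X.IsPath x x l) :
    X.IsCycle (X.pathChain l) := by
  show X.boundary _ = 0
  rw [boundary_pathChain h]
  simp

theorem isIntegral_pathChain (l : List X.E) : X.IsIntegral (X.pathChain l) := by
  intro f
  refine ⟨(l.count f : ℤ) - (l.count (X.inv f) : ℤ), ?_⟩
  rw [coe_pathChain_apply]
  push_cast
  ring

end SunadaGraph

end AuxChain



section AuxH1

namespace SunadaGraph

variable {X : SunadaGraph} {x₀ : X.V}

attribute [local instance] Classical.propDecidable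

noncomputable local instance : DecidableEq X.E := Classical.decEq _

/-- The class of a loop in `H1`. -/
def h1mk (γ : X.LoopAt x₀) : X.H1 x₀ := Quot.mk (X.H1Rel x₀) γ

theorem h1_mk_mul (a b : X.LoopAt x₀) :
    h1mk a * h1mk b
      = h1mk ⟨a.1 ++ b.1, a.2.append b.2⟩ := rfl

theorem h1_mk_inv (a : X.LoopAt x₀) :
    (h1mk a)⁻¹
      = h1mk ⟨X.revP a.1, a.2.revP⟩ := rfl

theorem h1_one_eq : (1 : X.H1 x₀) = h1mk ⟨[], .nil x₀⟩ := rfl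

theorem h1_comm (a b : X.H1 x₀) : a * b = b * a := by
  refine @Quot.ind _ _ (fun a : X.H1 x₀ => ∀ b : X.H1 x₀, a * b = b * a) (fun u => ?_) a b
  intro b
  refine @Quot.ind _ _ (fun b : X.H1 x₀ => h1mk u * b = b * h1mk u)
    (fun v => ?_) b
  show h1mk u * h1mk v = h1mk v * h1mk u
  rw [h1_mk_mul, h1_mk_mul]
  apply Quot.sound
  show X.Homologous x₀ x₀ (u.1 ++ v.1) (v.1 ++ u.1)
  have h := Homologous.swap ([] : List X.E) u.1 v.1 [] x₀ u.2 v.2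
    (by simpa using u.2.append v.2) (by simpa using v.2.append u.2)
  simpa using h

theorem homologous_insert {x' x m w : X.V} {A B C : List X.E}
    (hA : X.IsPath x m A) (hB : X.IsPath x' m B) (hC : X.IsPath m w C) :
    X.Homologous x w (A ++ C) (A ++ (X.revP B ++ (B ++ C))) := by
  have h0 := homologous_revP_append hB
  have h1 := h0.append_right hC
  have h2 := (Homologous.prepend_left hA h1).symm
  simpa using h2

/-- The standard loop attached to an edge, given a system of base paths. -/
def TEdge (X : SunadaGraph) (bp : X.V → List X.E) (e : X.E) : List X.E :=
  bp (X.s e) ++ e :: X.revP (bp (X.t e))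

theorem isPath_TEdge {bp : X.V → List X.E} (hbp : ∀ v, X.IsPath x₀ v (bp v)) (e : X.E) :
    X.IsPath x₀ x₀ (TEdge X bp e) :=
  (hbp _).append (.cons e (hbp (X.t e)).revP)

theorem TEdge_inv (bp : X.V → List X.E) (e : X.E) :
    TEdge X bp (X.inv e) = X.revP (TEdge X bp e) := by
  rw [TEdge, TEdge, X.s_inv, X.t_inv]
  rw [show (e : X.E) :: X.revP (bp (X.t e)) = [e] ++ X.revP (bp (X.t e)) from rfl]
  rw [revP_append, revP_append, revP_revP]
  simp [SunadaGraph.revP]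

/-- The class of the standard loop of an edge. -/
def tcl (x₀ : X.V) {bp : X.V → List X.E} (hbp : ∀ v, X.IsPath x₀ v (bp v)) (e : X.E) :
    X.H1 x₀ :=
  h1mk ⟨TEdge X bp e, isPath_TEdge hbp e⟩

theorem tcl_inv {bp : X.V → List X.E} (hbp : ∀ v, X.IsPath x₀ v (bp v)) (e : X.E) :
    tcl x₀ hbp (X.inv e) = (tcl x₀ hbp e)⁻¹ := by
  rw [tcl, tcl]
  erw [h1_mk_inv]
  unfold h1mk
  congr 1
  exact Subtype.ext (TEdge_inv bp e)

/-- The product of standard loop classes along a word of edges. -/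
def qfun (x₀ : X.V) {bp : X.V → List X.E} (hbp : ∀ v, X.IsPath x₀ v (bp v))
    (l : List X.E) : X.H1 x₀ :=
  (l.map (tcl x₀ hbp)).prod

theorem qfun_nil {bp : X.V → List X.E} (hbp : ∀ v, X.IsPath x₀ v (bp v)) :
    qfun x₀ hbp [] = 1 := rfl

theorem qfun_cons {bp : X.V → List X.E} (hbp : ∀ v, X.IsPath x₀ v (bp v))
    (e : X.E) (l : List X.E) :
    qfun x₀ hbp (e :: l) = tcl x₀ hbp e * qfun x₀ hbp l := by
  simp [qfun]

theorem qfun_append {bp : X.V → List X.E} (hbp : ∀ v, X.IsPath x₀ v (bp v))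
    (a b : List X.E) :
    qfun x₀ hbp (a ++ b) = qfun x₀ hbp a * qfun x₀ hbp b := by
  simp [qfun]

theorem class_eq_qfun {bp : X.V → List X.E} (hbp : ∀ v, X.IsPath x₀ v (bp v))
    {u v : X.V} {p : List X.E} (hp : X.IsPath u v p)
    (hL : X.IsPath x₀ x₀ (bp u ++ (p ++ X.revP (bp v)))) :
    h1mk ⟨bp u ++ (p ++ X.revP (bp v)), hL⟩ = qfun x₀ hbp p := by
  induction hp with
  | nil x =>
      rw [qfun_nil, h1_one_eq]
      apply Quot.sound
      show X.Homologous x₀ x₀ (bp x ++ ([] ++ X.revP (bp x))) []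
      have h := homologous_revP_append (hbp x).revP
      rw [revP_revP] at h
      simpa using h
  | @cons e y γ h ih =>
      have hL' : X.IsPath x₀ x₀ (bp (X.t e) ++ (γ ++ X.revP (bp y))) :=
        (hbp _).append (h.append (hbp y).revP)
      rw [qfun_cons, ← ih hL']
      rw [show qfun x₀ hbp γ = h1mk ⟨bp (X.t e) ++ (γ ++ X.revP (bp y)), hL'⟩ from
        (ih hL').symm] at *
      rw [tcl]
      erw [h1_mk_mul]
      apply Quot.sound
      show X.Homologous x₀ x₀ (bp (X.s e) ++ ((e :: γ) ++ X.revP (bp y)))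
        (TEdge X bp e ++ (bp (X.t e) ++ (γ ++ X.revP (bp y))))
      have hA : X.IsPath x₀ (X.t e) (bp (X.s e) ++ [e]) :=
        (hbp _).append (X.isPath_single e)
      have hC : X.IsPath (X.t e) x₀ (γ ++ X.revP (bp y)) :=
        h.append (hbp y).revP
      have h2 := homologous_insert hA (hbp (X.t e)) hC
      rw [TEdge]
      simpa using h2

theorem count_erase_aux {e : X.E} (u w : List X.E)
    (hbal : ∀ g, (e :: (u ++ X.inv e :: w)).count g
      = (e :: (u ++ X.inv e :: w)).count (X.inv g)) (g : X.E) :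
    (u ++ w).count g = (u ++ w).count (X.inv g) := by
  have h1 := hbal g
  have i1 : (X.inv e = X.inv g) ↔ (e = g) := by
    constructor
    · intro h; have := congrArg X.inv h; rwa [X.inv_inv, X.inv_inv] at this
    · rintro rfl; rfl
  have i2 : (e = X.inv g) ↔ (X.inv e = g) := by
    constructor
    · rintro rfl; exact X.inv_inv g
    · rintro rfl; exact (X.inv_inv e).symm
  simp only [List.count_cons, List.count_append, beq_iff_eq, i1, i2] at h1
  simp only [List.count_append]
  by_cases h2 : e = g <;> by_cases h3 : X.inv e = g
  · exact absurd (h3.trans h2.symm) (X.inv_ne e)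
  all_goals simp only [h2, h3, if_true, if_false] at h1 <;> omega

theorem qfun_balanced {bp : X.V → List X.E} (hbp : ∀ v, X.IsPath x₀ v (bp v)) :
    ∀ (N : ℕ) (l : List X.E), l.length ≤ N →
      (∀ e, l.count e = l.count (X.inv e)) → qfun x₀ hbp l = 1 := by
  intro N
  induction N with
  | zero =>
      intro l hl _
      have : l = [] := List.length_eq_zero_iff.mp (Nat.le_zero.mp hl)
      rw [this, qfun_nil]
  | succ N ih =>
      intro l hl hbal
      match l with
      | [] => rw [qfun_nil]
      | e :: l' =>
          have hmem : X.inv e ∈ l' := by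
            have h1 : 0 < (e :: l').count e := by simp [List.count_cons]
            have h2 : 0 < (e :: l').count (X.inv e) := by rw [← hbal e]; exact h1
            have h3 : X.inv e ∈ e :: l' := List.count_pos_iff.mp h2
            rcases List.mem_cons.mp h3 with h | h
            · exact absurd h (X.inv_ne e)
            · exact h
          obtain ⟨u, w, huw⟩ := List.append_of_mem hmem
          subst huw
          have hbal' : ∀ g, (u ++ w).count g = (u ++ w).count (X.inv g) :=
            count_erase_aux u w hbal
          have hlen : (u ++ w).length ≤ N := by
            simp only [List.length_cons, List.length_append] at hl ⊢
            omega
          have hq := ih (u ++ w) hlen hbal'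
          rw [qfun_cons, qfun_append]
          rw [show (X.inv e :: w) = [X.inv e] ++ w from rfl, qfun_append]
          have hsingle : qfun x₀ hbp [X.inv e] = (tcl x₀ hbp e)⁻¹ := by
            rw [show ([X.inv e] : List X.E) = X.inv e :: [] from rfl, qfun_cons,
              qfun_nil, mul_one, tcl_inv]
          rw [hsingle]
          rw [qfun_append] at hq
          calc tcl x₀ hbp e * (qfun x₀ hbp u * ((tcl x₀ hbp e)⁻¹ * qfun x₀ hbp w))
              = tcl x₀ hbp e * ((tcl x₀ hbp e)⁻¹ * (qfun x₀ hbp u * qfun x₀ hbp w)) := by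
                rw [h1_comm (qfun x₀ hbp u) (((tcl x₀ hbp e)⁻¹ * qfun x₀ hbp w)),
                  mul_assoc, h1_comm (qfun x₀ hbp w) (qfun x₀ hbp u)]
            _ = qfun x₀ hbp u * qfun x₀ hbp w := by
                rw [← mul_assoc, mul_inv_cancel, one_mul]
            _ = 1 := hq

theorem pathChain_count {l : List X.E} (h : X.pathChain l = 0) (f : X.E) :
    l.count f = l.count (X.inv f) := by
  have h1 : ((X.pathChain l : ↥X.C1) : X.E →₀ ℝ) f = 0 := by rw [h]; rfl
  rw [coe_pathChain_apply] at h1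
  have h2 : (l.count f : ℝ) = (l.count (X.inv f) : ℝ) := by linarith
  exact_mod_cast h2

/-- The chain map from homology classes of loops to 1-chains. -/
noncomputable def chainMap (X : SunadaGraph) (x₀ : X.V) : X.H1 x₀ → ↥X.C1 :=
  Quot.lift (fun γ : X.LoopAt x₀ => X.pathChain γ.1)
    (fun _ _ h => homologous_pathChain h)

theorem chainMap_mk (γ : X.LoopAt x₀) :
    X.chainMap x₀ (Quot.mk _ γ) = X.pathChain γ.1 := rfl

theorem chainMap_injective (hconn : X.Connected) :
    Function.Injective (X.chainMap x₀) := by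
  classical
  have hbp : ∀ v, X.IsPath x₀ v ((hconn x₀ v).choose) := fun v => (hconn x₀ v).choose_spec
  set bp : X.V → List X.E := fun v => (hconn x₀ v).choose with hbp_def
  intro a b
  refine @Quot.ind _ _
    (fun a : X.H1 x₀ => X.chainMap x₀ a = X.chainMap x₀ b → a = b) (fun γ => ?_) a
  refine @Quot.ind _ _
    (fun b : X.H1 x₀ => X.chainMap x₀ (h1mk γ) = X.chainMap x₀ b →
      h1mk γ = b) (fun δ => ?_) b
  intro h
  have hchain : X.pathChain γ.1 = X.pathChain δ.1 := h
  have hσpath : X.IsPath x₀ x₀ (γ.1 ++ X.revP δ.1) := γ.2.append δ.2.revP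
  have hσchain : X.pathChain (γ.1 ++ X.revP δ.1) = 0 := by
    rw [pathChain_append, pathChain_revP, hchain]
    abel
  have hq : qfun x₀ hbp (γ.1 ++ X.revP δ.1) = 1 :=
    qfun_balanced hbp _ _ le_rfl (pathChain_count hσchain)
  have hL : X.IsPath x₀ x₀ (bp x₀ ++ ((γ.1 ++ X.revP δ.1) ++ X.revP (bp x₀))) :=
    (hbp x₀).append (hσpath.append (hbp x₀).revP)
  have hclass := class_eq_qfun hbp hσpath hL
  have hconj : h1mk ⟨bp x₀ ++ ((γ.1 ++ X.revP δ.1) ++ X.revP (bp x₀)), hL⟩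
      = h1mk ⟨γ.1 ++ X.revP δ.1, hσpath⟩ := by
    have hmul : h1mk ⟨bp x₀ ++ ((γ.1 ++ X.revP δ.1) ++ X.revP (bp x₀)), hL⟩
        = h1mk ⟨bp x₀, hbp x₀⟩ *
          (h1mk ⟨γ.1 ++ X.revP δ.1, hσpath⟩ * (h1mk ⟨bp x₀, hbp x₀⟩)⁻¹) := by
      erw [h1_mk_inv, h1_mk_mul]
    rw [hmul, h1_comm, inv_mul_cancel_right]
  have hone : h1mk ⟨γ.1 ++ X.revP δ.1, hσpath⟩ = 1 := by
    rw [← hconj, hclass, hq]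
  have hfinal : h1mk γ * (h1mk δ)⁻¹ = 1 := by
    erw [h1_mk_inv, h1_mk_mul]
    exact hone
  show h1mk γ = h1mk δ
  exact mul_inv_eq_one.mp hfinal

end SunadaGraph

end AuxH1


section AuxSurj

namespace SunadaGraph

variable {X : SunadaGraph}

attribute [local instance] Classical.propDecidable

noncomputable local instance : DecidableEq X.E := Classical.decEq _

/-- The involution on edges as an equivalence. -/
def invEquiv (X : SunadaGraph) : X.E ≃ X.E where
  toFun := X.inv
  invFun := X.inv
  left_inv := X.inv_inv
  right_inv := X.inv_inv

theorem sOut_eq_zero (c : ↥X.C1) (hc : X.IsCycle c) (v : X.V) :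
    ∑ e ∈ (c : X.E →₀ ℝ).support,
      (c : X.E →₀ ℝ) e * (if X.s e = v then (1:ℝ) else 0) = 0 := by
  have h0 : (X.boundary c) v = 0 := by rw [show X.boundary c = 0 from hc]; rfl
  unfold SunadaGraph.boundary at h0
  rw [Finsupp.sum_apply, Finsupp.sum] at h0
  simp only [Finsupp.smul_apply, Finsupp.sub_apply, Finsupp.single_apply,
    smul_eq_mul] at h0
  rw [show (∑ e ∈ (c : X.E →₀ ℝ).support, (c : X.E →₀ ℝ) e *
      ((if X.t e = v then (1:ℝ) else 0) - (if X.s e = v then 1 else 0)))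
      = (∑ e ∈ (c : X.E →₀ ℝ).support, (c : X.E →₀ ℝ) e * (if X.t e = v then (1:ℝ) else 0))
        - (∑ e ∈ (c : X.E →₀ ℝ).support, (c : X.E →₀ ℝ) e * (if X.s e = v then (1:ℝ) else 0))
      from by rw [← Finset.sum_sub_distrib]; exact Finset.sum_congr rfl fun e _ => by ring]
      at h0
  have hAB : (∑ e ∈ (c : X.E →₀ ℝ).support,
        (c : X.E →₀ ℝ) e * (if X.t e = v then (1:ℝ) else 0))
      = ∑ e ∈ (c : X.E →₀ ℝ).support,
        -((c : X.E →₀ ℝ) e * (if X.s e = v then (1:ℝ) else 0)) := by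
    refine Finset.sum_equiv X.invEquiv (fun e => ?_) (fun e he => ?_)
    · simp only [Finsupp.mem_support_iff, invEquiv]
      constructor
      · intro h hne
        apply h
        have := c.2 e
        simp only [Equiv.coe_fn_mk] at hne
        rw [this] at hne
        simpa using hne
      · intro h hne
        apply h
        have := c.2 e
        simp only [Equiv.coe_fn_mk]
        rw [this, hne, neg_zero]
    · have h1 : (c : X.E →₀ ℝ) (X.invEquiv e) = -(c : X.E →₀ ℝ) e := c.2 e
      have h2 : X.s (X.invEquiv e) = X.t e := X.s_inv e
      rw [h1, h2]
      ring
  rw [hAB, Finset.sum_neg_distrib] at h0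
  linarith

theorem exists_pos_out {c : ↥X.C1} (hc : X.IsCycle c) {f : X.E}
    (hf : 0 < (c : X.E →₀ ℝ) f) :
    ∃ g, X.s g = X.t f ∧ 0 < (c : X.E →₀ ℝ) g := by
  by_contra hno
  push_neg at hno
  have h0 := sOut_eq_zero c hc (X.t f)
  have hmem : X.inv f ∈ (c : X.E →₀ ℝ).support := by
    rw [Finsupp.mem_support_iff, c.2 f]
    intro h
    rw [neg_eq_zero] at h
    exact absurd h (ne_of_gt hf)
  have hlt : ∑ e ∈ (c : X.E →₀ ℝ).support,
      (c : X.E →₀ ℝ) e * (if X.s e = X.t f then (1:ℝ) else 0)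
      < ∑ _e ∈ (c : X.E →₀ ℝ).support, (0:ℝ) := by
    refine Finset.sum_lt_sum (fun e _ => ?_) ⟨X.inv f, hmem, ?_⟩
    · by_cases h : X.s e = X.t f
      · simp only [h, if_true, mul_one]
        exact hno e h
      · simp [h]
    · have h1 : X.s (X.inv f) = X.t f := X.s_inv f
      have h2 : (c : X.E →₀ ℝ) (X.inv f) = -(c : X.E →₀ ℝ) f := c.2 f
      rw [h1, if_pos rfl, h2, mul_one]
      linarith
  rw [Finset.sum_const_zero] at hlt
  linarith [h0]

theorem exists_posloop {c : ↥X.C1} (hc : X.IsCycle c) (hne : c ≠ 0) :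
    ∃ (v : X.V) (l : List X.E), l ≠ [] ∧ X.IsPath v v l ∧ l.Nodup ∧
      ∀ e ∈ l, 0 < (c : X.E →₀ ℝ) e := by
  classical
  -- find an edge with positive coefficient
  have hex : ∃ e, 0 < (c : X.E →₀ ℝ) e := by
    have h1 : (c : X.E →₀ ℝ) ≠ 0 := by
      intro h
      apply hne
      exact Subtype.ext h
    obtain ⟨e, he⟩ := Finsupp.ne_iff.mp h1
    simp only [Finsupp.coe_zero, Pi.zero_apply] at he
    rcases lt_or_gt_of_ne he with h | h
    · refine ⟨X.inv e, ?_⟩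
      rw [c.2 e]
      linarith
    · exact ⟨e, h⟩
  obtain ⟨e₀, he₀⟩ := hex
  have hstep : ∀ p : {e : X.E // 0 < (c : X.E →₀ ℝ) e},
      ∃ q : {e : X.E // 0 < (c : X.E →₀ ℝ) e}, X.s q.1 = X.t p.1 := by
    intro p
    obtain ⟨g, hg1, hg2⟩ := exists_pos_out hc p.2
    exact ⟨⟨g, hg2⟩, hg1⟩
  let f : ℕ → {e : X.E // 0 < (c : X.E →₀ ℝ) e} :=
    fun n => Nat.rec ⟨e₀, he₀⟩ (fun _ p => (hstep p).choose) n
  have hf : ∀ k, X.s (f (k+1)).1 = X.t (f k).1 := fun k => (hstep (f k)).choose_spec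
  have hpath : ∀ (a m : ℕ), X.IsPath (X.s (f a).1) (X.s (f (a+m)).1)
      ((List.range m).map fun k => (f (a+k)).1) := by
    intro a m
    induction m with
    | zero => simpa using IsPath.nil (X.s (f a).1)
    | succ m ihm =>
        rw [List.range_succ, List.map_append]
        refine ihm.append ?_
        have h1 := X.isPath_single (f (a+m)).1
        have h2 : X.t (f (a+m)).1 = X.s (f (a+m+1)).1 := (hf (a+m)).symm
        rw [h2] at h1
        rw [show a + (m+1) = a+m+1 from rfl]
        simpa using h1
  -- pigeonhole
  have hmaps : ∀ k ∈ Finset.range ((c : X.E →₀ ℝ).support.card + 1),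
      (f k).1 ∈ (c : X.E →₀ ℝ).support :=
    fun k _ => Finsupp.mem_support_iff.mpr (ne_of_gt (f k).2)
  obtain ⟨i, _, j, _, hij, heq⟩ :=
    Finset.exists_ne_map_eq_of_card_lt_of_maps_to
      (by simp) hmaps
  have hPex : ∃ j : ℕ, ∃ i : ℕ, i < j ∧ (f i).1 = (f j).1 := by
    rcases lt_or_gt_of_ne hij with h | h
    · exact ⟨j, i, h, heq⟩
    · exact ⟨i, j, h, heq.symm⟩
  let j₀ := Nat.find hPex
  obtain ⟨i₀, hi₀lt, hi₀eq⟩ := Nat.find_spec hPex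
  have hmin : ∀ j' < j₀, ¬ ∃ i, i < j' ∧ (f i).1 = (f j').1 := fun j' hj' =>
    Nat.find_min hPex hj'
  refine ⟨X.s (f i₀).1, (List.range (j₀ - i₀)).map fun k => (f (i₀+k)).1, ?_, ?_, ?_, ?_⟩
  · intro h
    have : j₀ - i₀ = 0 := by
      have := congrArg List.length h
      simpa using this
    omega
  · have h1 := hpath i₀ (j₀ - i₀)
    rw [show i₀ + (j₀ - i₀) = j₀ by omega] at h1
    rw [show X.s (f j₀).1 = X.s (f i₀).1 from by rw [← hi₀eq]] at h1
    exact h1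
  · refine List.Nodup.map_on ?_ List.nodup_range
    intro x hx y hy hxy
    rw [List.mem_range] at hx hy
    by_contra hne2
    rcases lt_or_gt_of_ne hne2 with h | h
    · exact hmin (i₀ + y) (by omega) ⟨i₀ + x, by omega, hxy⟩
    · exact hmin (i₀ + x) (by omega) ⟨i₀ + y, by omega, hxy.symm⟩
  · intro e he
    rw [List.mem_map] at he
    obtain ⟨k, _, hk⟩ := he
    rw [← hk]
    exact (f (i₀ + k)).2

theorem cycle_realized (hconn : X.Connected) (x₀ : X.V) :
    ∀ (N : ℕ) (c : ↥X.C1) (n : X.E → ℤ), X.IsCycle c →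
      (∀ e, (c : X.E →₀ ℝ) e = (n e : ℝ)) →
      (∑ e ∈ (c : X.E →₀ ℝ).support, (n e).natAbs) ≤ N →
      ∃ γ : X.LoopAt x₀, X.pathChain γ.1 = c := by
  intro N
  induction N using Nat.strong_induction_on with
  | _ N ih =>
  intro c n hcyc hint hsum
  by_cases hc0 : c = 0
  · exact ⟨⟨[], .nil x₀⟩, by rw [pathChain_nil, hc0]⟩
  obtain ⟨v, l, hlne, hlpath, hlnodup, hlpos⟩ := exists_posloop hcyc hc0
  -- facts about l
  have hinvnot : ∀ e ∈ l, X.inv e ∉ l := by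
    intro e he hinv
    have h1 := hlpos e he
    have h2 := hlpos (X.inv e) hinv
    rw [c.2 e] at h2
    linarith
  have hcount : ∀ e ∈ l, l.count e = 1 := fun e he =>
    List.count_eq_one_of_mem hlnodup he
  have hcount0 : ∀ e, e ∉ l → l.count e = 0 := fun e he =>
    List.count_eq_zero.mpr he
  set c' : ↥X.C1 := c - X.pathChain l with hc'def
  set n' : X.E → ℤ := fun e => n e - (l.count e : ℤ) + (l.count (X.inv e) : ℤ) with hn'def
  have hint' : ∀ e, (c' : X.E →₀ ℝ) e = (n' e : ℝ) := by
    intro e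
    have hsub : (c' : X.E →₀ ℝ) e
        = (c : X.E →₀ ℝ) e - ((X.pathChain l : ↥X.C1) : X.E →₀ ℝ) e := rfl
    rw [hsub, coe_pathChain_apply, hint e, hn'def]
    push_cast
    ring
  have hcyc' : X.IsCycle c' := by
    show X.boundary _ = 0
    rw [hc'def, boundary_sub, show X.boundary c = 0 from hcyc, boundary_pathChain hlpath]
    simp
  have hsupp : (c' : X.E →₀ ℝ).support ⊆ (c : X.E →₀ ℝ).support := by
    intro e he
    rw [Finsupp.mem_support_iff] at he ⊢
    intro hce
    apply he
    have h1 : e ∉ l := by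
      intro hel
      exact absurd hce (ne_of_gt (hlpos e hel))
    have h2 : X.inv e ∉ l := by
      intro hel
      have := hlpos (X.inv e) hel
      rw [c.2 e, hce, neg_zero] at this
      exact lt_irrefl _ this
    rw [hint' e, hn'def]
    have hn0 : n e = 0 := by
      have := hint e
      rw [hce] at this
      exact_mod_cast this.symm
    simp [hcount0 e h1, hcount0 (X.inv e) h2, hn0]
  -- per-term bound on natAbs
  have hterm : ∀ e ∈ (c : X.E →₀ ℝ).support, (n' e).natAbs ≤ (n e).natAbs := by
    intro e _
    by_cases he : e ∈ l
    · have h1 : l.count e = 1 := hcount e he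
      have h2 : l.count (X.inv e) = 0 := hcount0 _ (hinvnot e he)
      have hpos : 0 < n e := by
        have := hlpos e he
        rw [hint e] at this
        exact_mod_cast this
      rw [hn'def]
      simp only [h1, h2]
      omega
    · by_cases hinv : X.inv e ∈ l
      · have h1 : l.count e = 0 := hcount0 _ he
        have h2 : l.count (X.inv e) = 1 := hcount (X.inv e) hinv
        have hneg : n e < 0 := by
          have h3 := hlpos (X.inv e) hinv
          rw [c.2 e, hint e] at h3
          have : (0:ℝ) < -(n e : ℝ) := h3
          have : (n e : ℝ) < 0 := by linarith
          exact_mod_cast this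
        rw [hn'def]
        simp only [h1, h2]
        omega
      · have h1 : l.count e = 0 := hcount0 _ he
        have h2 : l.count (X.inv e) = 0 := hcount0 _ hinv
        rw [hn'def]
        simp [h1, h2]
  -- strict decrease at an edge of l
  obtain ⟨e₁, he₁⟩ : ∃ e, e ∈ l := by
    cases l with
    | nil => exact absurd rfl hlne
    | cons a l' => exact ⟨a, List.mem_cons_self⟩
  have he₁supp : e₁ ∈ (c : X.E →₀ ℝ).support :=
    Finsupp.mem_support_iff.mpr (ne_of_gt (hlpos e₁ he₁))
  have hstrict : (n' e₁).natAbs < (n e₁).natAbs := by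
    have h1 : l.count e₁ = 1 := hcount e₁ he₁
    have h2 : l.count (X.inv e₁) = 0 := hcount0 _ (hinvnot e₁ he₁)
    have hpos : 0 < n e₁ := by
      have := hlpos e₁ he₁
      rw [hint e₁] at this
      exact_mod_cast this
    rw [hn'def]
    simp only [h1, h2]
    omega
  -- the new sum is strictly smaller
  have hsum3 : (∑ e ∈ (c' : X.E →₀ ℝ).support, (n' e).natAbs)
      = ∑ e ∈ (c : X.E →₀ ℝ).support, (n' e).natAbs := by
    refine Finset.sum_subset hsupp ?_
    intro e _ henot
    rw [Finsupp.notMem_support_iff] at henot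
    have h0 : (n' e : ℝ) = 0 := by rw [← hint' e, henot]
    have : n' e = 0 := by exact_mod_cast h0
    rw [this]
    rfl
  have hlt : (∑ e ∈ (c' : X.E →₀ ℝ).support, (n' e).natAbs)
      < ∑ e ∈ (c : X.E →₀ ℝ).support, (n e).natAbs := by
    rw [hsum3]
    exact Finset.sum_lt_sum hterm ⟨e₁, he₁supp, hstrict⟩
  -- apply the induction hypothesis
  obtain ⟨δ, hδ⟩ := ih (∑ e ∈ (c' : X.E →₀ ℝ).support, (n' e).natAbs)
    (by omega) c' n' hcyc' hint' le_rfl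
  -- conjugate the positive loop to the basepoint
  obtain ⟨β, hβ⟩ := hconn x₀ v
  have hμpath : X.IsPath x₀ x₀ (β ++ (l ++ X.revP β)) :=
    hβ.append (hlpath.append hβ.revP)
  refine ⟨⟨(β ++ (l ++ X.revP β)) ++ δ.1, hμpath.append δ.2⟩, ?_⟩
  show X.pathChain ((β ++ (l ++ X.revP β)) ++ δ.1) = c
  rw [pathChain_append, pathChain_append, pathChain_append, pathChain_revP, hδ, hc'def]
  abel


end SunadaGraph

end AuxSurj

/-- For a connected graph `X` with basepoint `x₀`, the homology
classes of loops based at `x₀` form a group under composition (the group `X.H1 x₀`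
constructed above), and the map `⟦γ⟧ ↦ c_γ` is a well-defined group isomorphism from
this group onto the group `Z₁(X,ℤ)` of integral 1-cycles. -/
theorem loop_classes_iso_integral_cycles (X : SunadaGraph) (hconn : X.Connected) (x₀ : X.V) :
    ∃ θ : X.H1 x₀ → ↥X.C1,
      (∀ γ : X.LoopAt x₀, θ (Quot.mk _ γ) = X.pathChain γ.1) ∧
      (∀ a b : X.H1 x₀, θ (a * b) = θ a + θ b) ∧
      Function.Injective θ ∧
      Set.range θ = {c : ↥X.C1 | X.IsCycle c ∧ X.IsIntegral c} := by
  classical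
  refine ⟨X.chainMap x₀, fun γ => rfl, ?_, SunadaGraph.chainMap_injective hconn, ?_⟩
  · intro a b
    refine @Quot.ind _ _
      (fun a : X.H1 x₀ => ∀ b : X.H1 x₀,
        X.chainMap x₀ (a * b) = X.chainMap x₀ a + X.chainMap x₀ b) (fun γ => ?_) a b
    intro b
    refine @Quot.ind _ _
      (fun b : X.H1 x₀ => X.chainMap x₀ (SunadaGraph.h1mk γ * b)
        = X.chainMap x₀ (SunadaGraph.h1mk γ) + X.chainMap x₀ b) (fun δ => ?_) b
    exact SunadaGraph.pathChain_append γ.1 δ.1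
  · ext c
    constructor
    · rintro ⟨a, rfl⟩
      refine @Quot.ind _ _
        (fun a : X.H1 x₀ => X.chainMap x₀ a ∈
          {c : ↥X.C1 | X.IsCycle c ∧ X.IsIntegral c}) (fun γ => ?_) a
      exact ⟨SunadaGraph.isCycle_pathChain_loop γ.2, SunadaGraph.isIntegral_pathChain γ.1⟩
    · rintro ⟨hcyc, hint⟩
      have hn : ∀ e, (c : X.E →₀ ℝ) e = (((hint e).choose : ℤ) : ℝ) :=
        fun e => (hint e).choose_spec
      obtain ⟨γ, hγ⟩ := SunadaGraph.cycle_realized hconn x₀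
        (∑ e ∈ (c : X.E →₀ ℝ).support, ((hint e).choose).natAbs) c
        (fun e => (hint e).choose) hcyc hn le_rfl
      exact ⟨Quot.mk _ γ, hγ⟩
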